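/- Let A be a finite-dimensional perm algebra and R ∈ A ⊗ A symmetric. Then R satisfies the S-equation if and only if for all b1, b2 ∈ A*: R#(b1)·R#(b2) = R#( κr*(R#(b1))(b2) − κl*(R#(b1))(b2) + κr*(R#(b2))(b1) ), where R# : A* → A is defined by ⟨R#(u1), u2⟩ = ⟨R, u1 ⊗ u2⟩, and ⟨κl*(a)(u), x⟩ = ⟨u, ax⟩, ⟨κr*(a)(u), x⟩ = ⟨u, xa⟩. -/
import Mathlib


open TensorProduct

/-- For `R = Σᵢ aᵢ ⊗ āᵢ ∈ A ⊗ A`, the element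
`P(R) = R₁₃R₁₂ − R₁₃R₂₃ + R₂₃R₁₂ − R₁₂R₂₃ ∈ A ⊗ A ⊗ A`; the S-equation is `P(R) = 0`. -/
noncomputable def sTensor {k A : Type*} [Field k] [AddCommGroup A] [Module k A]
    (mul : A →ₗ[k] A →ₗ[k] A) (R : A ⊗[k] A) : A ⊗[k] (A ⊗[k] A) :=
  let M : A ⊗[k] A →ₗ[k] A := TensorProduct.lift mul
  let X : (A ⊗[k] A) ⊗[k] (A ⊗[k] A) := R ⊗ₜ[k] R
  let Y := (TensorProduct.tensorTensorTensorComm k A A A A) X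
  (TensorProduct.map M LinearMap.id)
      ((TensorProduct.map LinearMap.id (TensorProduct.comm k A A).toLinearMap) Y)
  - (TensorProduct.assoc k A A A) ((TensorProduct.map LinearMap.id M) Y)
  + (TensorProduct.map LinearMap.id (TensorProduct.map M LinearMap.id))
      ((TensorProduct.map LinearMap.id (TensorProduct.assoc k A A A).symm.toLinearMap)
        ((TensorProduct.assoc k A A (A ⊗[k] A))
          ((TensorProduct.tensorTensorTensorComm k A A A A)
            ((TensorProduct.comm k (A ⊗[k] A) (A ⊗[k] A)) X))))
  - (TensorProduct.map LinearMap.id (TensorProduct.map M LinearMap.id))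
      ((TensorProduct.map LinearMap.id (TensorProduct.assoc k A A A).symm.toLinearMap)
        ((TensorProduct.assoc k A A (A ⊗[k] A)) X))

/-- The linear map `R♯ : A* → A` attached to `R ∈ A ⊗ A`, determined by
`⟨R♯(u₁), u₂⟩ = ⟨R, u₁ ⊗ u₂⟩`. -/
noncomputable def rSharp {k A : Type*} [Field k] [AddCommGroup A] [Module k A]
    (R : A ⊗[k] A) : Module.Dual k A → A :=
  fun u => (TensorProduct.lid k A) ((TensorProduct.map u LinearMap.id) R)

section Aux

variable {k A : Type*} [Field k] [AddCommGroup A] [Module k A]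

noncomputable def contr3 (u v : Module.Dual k A) : A ⊗[k] (A ⊗[k] A) →ₗ[k] A :=
  (TensorProduct.rid k A).toLinearMap ∘ₗ
    TensorProduct.map LinearMap.id
      ((TensorProduct.lid k k).toLinearMap ∘ₗ TensorProduct.map u v)

@[simp] lemma contr3_tmul (u v : Module.Dual k A) (x y z : A) :
    contr3 u v (x ⊗ₜ[k] (y ⊗ₜ[k] z)) = (u y * v z) • x := by
  simp [contr3, smul_smul]

@[simp] lemma rSharp_tmul (a b : A) (u : Module.Dual k A) :
    rSharp (a ⊗ₜ[k] b) u = u a • b := by simp [rSharp]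

lemma rSharp_zeroR (u : Module.Dual k A) : rSharp (0 : A ⊗[k] A) u = 0 := by simp [rSharp]

lemma rSharp_addR (S T : A ⊗[k] A) (u : Module.Dual k A) :
    rSharp (S + T) u = rSharp S u + rSharp T u := by simp [rSharp]

lemma rSharp_zerou (S : A ⊗[k] A) : rSharp S (0 : Module.Dual k A) = 0 := by
  induction S using TensorProduct.induction_on with
  | zero => simp [rSharp_zeroR]
  | tmul a b => simp
  | add x y hx hy => simp [rSharp_addR, hx, hy]

lemma rSharp_addu (S : A ⊗[k] A) (u v : Module.Dual k A) :
    rSharp S (u + v) = rSharp S u + rSharp S v := by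
  induction S using TensorProduct.induction_on with
  | zero => simp [rSharp_zeroR]
  | tmul a b => simp [add_smul]
  | add x y hx hy => simp [rSharp_addR, hx, hy]; abel

lemma rSharp_subu (S : A ⊗[k] A) (u v : Module.Dual k A) :
    rSharp S (u - v) = rSharp S u - rSharp S v := by
  induction S using TensorProduct.induction_on with
  | zero => simp [rSharp_zeroR]
  | tmul a b => simp [sub_smul]
  | add x y hx hy => simp [rSharp_addR, hx, hy]; abel

lemma dualMap_add' (f g : A →ₗ[k] A) (u : Module.Dual k A) :
    (f + g).dualMap u = f.dualMap u + g.dualMap u := by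
  ext x; simp

lemma dualMap_zero' (u : Module.Dual k A) :
    (0 : A →ₗ[k] A).dualMap u = 0 := by
  ext x; simp

variable (mul : A →ₗ[k] A →ₗ[k] A)

noncomputable def trm1 : (A ⊗[k] A) ⊗[k] (A ⊗[k] A) →ₗ[k] A ⊗[k] (A ⊗[k] A) :=
  (TensorProduct.map (TensorProduct.lift mul) LinearMap.id) ∘ₗ
    (TensorProduct.map LinearMap.id (TensorProduct.comm k A A).toLinearMap) ∘ₗ
      (TensorProduct.tensorTensorTensorComm k A A A A).toLinearMap

noncomputable def trm2 : (A ⊗[k] A) ⊗[k] (A ⊗[k] A) →ₗ[k] A ⊗[k] (A ⊗[k] A) :=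
  (TensorProduct.assoc k A A A).toLinearMap ∘ₗ
    (TensorProduct.map LinearMap.id (TensorProduct.lift mul)) ∘ₗ
      (TensorProduct.tensorTensorTensorComm k A A A A).toLinearMap

noncomputable def trm4 : (A ⊗[k] A) ⊗[k] (A ⊗[k] A) →ₗ[k] A ⊗[k] (A ⊗[k] A) :=
  (TensorProduct.map LinearMap.id (TensorProduct.map (TensorProduct.lift mul) LinearMap.id)) ∘ₗ
    (TensorProduct.map LinearMap.id (TensorProduct.assoc k A A A).symm.toLinearMap) ∘ₗ
      (TensorProduct.assoc k A A (A ⊗[k] A)).toLinearMap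

noncomputable def trm3 : (A ⊗[k] A) ⊗[k] (A ⊗[k] A) →ₗ[k] A ⊗[k] (A ⊗[k] A) :=
  trm4 mul ∘ₗ
    (TensorProduct.tensorTensorTensorComm k A A A A).toLinearMap ∘ₗ
      (TensorProduct.comm k (A ⊗[k] A) (A ⊗[k] A)).toLinearMap

@[simp] lemma trm1_tmul (a b c d : A) :
    trm1 mul ((a ⊗ₜ[k] b) ⊗ₜ[k] (c ⊗ₜ[k] d)) = (mul a c) ⊗ₜ[k] (d ⊗ₜ[k] b) := by
  simp [trm1]

@[simp] lemma trm2_tmul (a b c d : A) :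
    trm2 mul ((a ⊗ₜ[k] b) ⊗ₜ[k] (c ⊗ₜ[k] d)) = a ⊗ₜ[k] (c ⊗ₜ[k] (mul b d)) := by
  simp [trm2]

@[simp] lemma trm3_tmul (a b c d : A) :
    trm3 mul ((a ⊗ₜ[k] b) ⊗ₜ[k] (c ⊗ₜ[k] d)) = c ⊗ₜ[k] ((mul a d) ⊗ₜ[k] b) := by
  simp [trm3, trm4]

@[simp] lemma trm4_tmul (a b c d : A) :
    trm4 mul ((a ⊗ₜ[k] b) ⊗ₜ[k] (c ⊗ₜ[k] d)) = a ⊗ₜ[k] ((mul b c) ⊗ₜ[k] d) := by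
  simp [trm4]


lemma key1 (b1 b2 : Module.Dual k A) (S T : A ⊗[k] A) :
    mul (rSharp S b1) (rSharp T b2)
      = contr3 b2 b1 (trm1 mul
          ((TensorProduct.comm k A A) S ⊗ₜ[k] (TensorProduct.comm k A A) T)) := by
  induction S using TensorProduct.induction_on with
  | zero => simp [rSharp_zeroR]
  | tmul a b =>
    induction T using TensorProduct.induction_on with
    | zero => simp [rSharp_zeroR]
    | tmul c d => simp [smul_smul, mul_comm]
    | add T1 T2 h1 h2 => simp only [rSharp_addR, map_add, tmul_add, h1, h2]
  | add S1 S2 h1 h2 =>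
    simp only [rSharp_addR, map_add, add_tmul, LinearMap.add_apply, h1, h2]

lemma key2 (b1 b2 : Module.Dual k A) (S T : A ⊗[k] A) :
    rSharp S ((mul.flip (rSharp T b2)).dualMap b1)
      = contr3 b2 b1 (trm2 mul ((TensorProduct.comm k A A) S ⊗ₜ[k] T)) := by
  induction S using TensorProduct.induction_on with
  | zero => simp [rSharp_zeroR]
  | tmul a b =>
    induction T using TensorProduct.induction_on with
    | zero => simp [rSharp_zerou, rSharp_zeroR, dualMap_zero']
    | tmul c d => simp [smul_smul, mul_comm]
    | add T1 T2 h1 h2 =>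
      simp only [rSharp_addR, rSharp_addu, map_add, tmul_add, dualMap_add', h1, h2]
  | add S1 S2 h1 h2 =>
    simp only [rSharp_addR, map_add, add_tmul, h1, h2]

lemma key3 (b1 b2 : Module.Dual k A) (S T : A ⊗[k] A) :
    rSharp T ((mul (rSharp S b1)).dualMap b2)
      = contr3 b2 b1 (trm3 mul
          ((TensorProduct.comm k A A) S ⊗ₜ[k] (TensorProduct.comm k A A) T)) := by
  induction S using TensorProduct.induction_on with
  | zero => simp [rSharp_zeroR, rSharp_zerou, dualMap_zero']
  | tmul a b =>
    induction T using TensorProduct.induction_on with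
    | zero => simp [rSharp_zeroR]
    | tmul c d => simp [smul_smul, mul_comm]
    | add T1 T2 h1 h2 => simp only [rSharp_addR, map_add, tmul_add, h1, h2]
  | add S1 S2 h1 h2 =>
    simp only [rSharp_addR, rSharp_addu, map_add, add_tmul, dualMap_add', h1, h2]

lemma key4 (b1 b2 : Module.Dual k A) (S T : A ⊗[k] A) :
    rSharp T ((mul.flip (rSharp S b1)).dualMap b2)
      = contr3 b2 b1 (trm4 mul
          ((TensorProduct.comm k A A) T ⊗ₜ[k] (TensorProduct.comm k A A) S)) := by
  induction S using TensorProduct.induction_on with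
  | zero => simp [rSharp_zeroR, rSharp_zerou, dualMap_zero']
  | tmul a b =>
    induction T using TensorProduct.induction_on with
    | zero => simp [rSharp_zeroR]
    | tmul c d => simp [smul_smul, mul_comm]
    | add T1 T2 h1 h2 => simp only [rSharp_addR, map_add, add_tmul, h1, h2]
  | add S1 S2 h1 h2 =>
    simp only [rSharp_addR, rSharp_addu, map_add, tmul_add, dualMap_add', h1, h2]


lemma sTensor_eq (R : A ⊗[k] A) :
    sTensor mul R = trm1 mul (R ⊗ₜ[k] R) - trm2 mul (R ⊗ₜ[k] R)
      + trm3 mul (R ⊗ₜ[k] R) - trm4 mul (R ⊗ₜ[k] R) := rfl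

lemma dd_eval (w u v : Module.Dual k A) (t : A ⊗[k] (A ⊗[k] A)) :
    TensorProduct.dualDistrib k A (A ⊗[k] A)
        (w ⊗ₜ[k] (TensorProduct.dualDistrib k A A (u ⊗ₜ[k] v))) t
      = w (contr3 u v t) := by
  induction t using TensorProduct.induction_on with
  | zero => simp
  | tmul x s =>
    induction s using TensorProduct.induction_on with
    | zero => simp
    | tmul y z => simp [mul_comm, mul_assoc, mul_left_comm]
    | add s1 s2 h1 h2 => simp only [tmul_add, map_add, h1, h2]
  | add t1 t2 h1 h2 => simp only [map_add, h1, h2]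

set_option synthInstance.maxHeartbeats 1000000 in
lemma sep [FiniteDimensional k A] (t : A ⊗[k] (A ⊗[k] A))
    (h : ∀ u v : Module.Dual k A, contr3 u v t = 0) : t = 0 := by
  rw [← Module.forall_dual_apply_eq_zero_iff k]
  intro φ
  obtain ⟨P, rfl⟩ := (TensorProduct.dualDistribEquiv k A (A ⊗[k] A)).surjective φ
  induction P using TensorProduct.induction_on with
  | zero => simp only [map_zero, LinearMap.zero_apply]
  | tmul w G =>
    obtain ⟨Q, rfl⟩ := (TensorProduct.dualDistribEquiv k A A).surjective G
    induction Q using TensorProduct.induction_on with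
    | zero => simp only [map_zero, tmul_zero, LinearMap.zero_apply]
    | tmul u v =>
      have e1 : (TensorProduct.dualDistribEquiv k A (A ⊗[k] A))
          (w ⊗ₜ[k] (TensorProduct.dualDistribEquiv k A A) (u ⊗ₜ[k] v)) t
          = TensorProduct.dualDistrib k A (A ⊗[k] A)
              (w ⊗ₜ[k] (TensorProduct.dualDistrib k A A (u ⊗ₜ[k] v))) t := rfl
      rw [e1, dd_eval, h, map_zero]
    | add q1 q2 h1 h2 =>
      simp only [map_add, tmul_add, LinearMap.add_apply, h1, h2, add_zero]
  | add p1 p2 h1 h2 =>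
    simp only [map_add, LinearMap.add_apply, h1, h2, add_zero]

lemma contr_sTensor [FiniteDimensional k A] (R : A ⊗[k] A)
    (hsym : (TensorProduct.comm k A A) R = R) (b1 b2 : Module.Dual k A) :
    contr3 b2 b1 (sTensor mul R) =
      mul (rSharp R b1) (rSharp R b2) -
        rSharp R ((mul.flip (rSharp R b1)).dualMap b2 - (mul (rSharp R b1)).dualMap b2 +
          (mul.flip (rSharp R b2)).dualMap b1) := by
  have k1 := key1 mul b1 b2 R R
  have k2 := key2 mul b1 b2 R R
  have k3 := key3 mul b1 b2 R R
  have k4 := key4 mul b1 b2 R R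
  rw [hsym] at k1 k2 k3 k4
  rw [sTensor_eq, map_sub, map_add, map_sub, ← k1, ← k2, ← k3, ← k4,
    rSharp_addu, rSharp_subu]
  abel

end Aux

/-- For a symmetric `R ∈ A ⊗ A` over a finite-dimensional perm algebra `A`, `R` satisfies
the S-equation if and only if for all `b₁, b₂ ∈ A*`:
`R♯(b₁)·R♯(b₂) = R♯(κr*(R♯(b₁))(b₂) − κl*(R♯(b₁))(b₂) + κr*(R♯(b₂))(b₁))`,
where `κl*(a) = (mul a)*` and `κr*(a) = (mul.flip a)*` are the dual maps of left and right
multiplication. -/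
theorem sEquation_iff_operator {k A : Type*} [Field k] [AddCommGroup A] [Module k A]
    [FiniteDimensional k A]
    (mul : A →ₗ[k] A →ₗ[k] A)
    (hp1 : ∀ x y z, mul (mul x y) z = mul x (mul y z))
    (hp2 : ∀ x y z, mul x (mul y z) = mul x (mul z y))
    (R : A ⊗[k] A)
    (hsym : (TensorProduct.comm k A A) R = R) :
    sTensor mul R = 0
    ↔
    (∀ b1 b2 : Module.Dual k A,
      mul (rSharp R b1) (rSharp R b2) =
        rSharp R ((mul.flip (rSharp R b1)).dualMap b2 - (mul (rSharp R b1)).dualMap b2 +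
          (mul.flip (rSharp R b2)).dualMap b1)) := by
  constructor
  · intro h0 b1 b2
    have h := contr_sTensor mul R hsym b1 b2
    rw [h0, map_zero] at h
    exact sub_eq_zero.mp h.symm
  · intro hop
    apply sep
    intro u v
    rw [contr_sTensor mul R hsym v u]
    exact sub_eq_zero.mpr (hop v u)
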